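/- Let r ≥ 1 and Δ_1, …, Δ_r > 0. Let X be an ℝ^r-valued random vector with density f_X, and define f_Y(y) = (∏_{i=1}^r 1/Δ_i) · ∫_{∏_{i=1}^r [y_i − Δ_i/2, y_i + Δ_i/2]} f_X(x) dx. Assume that f_Y · log₂ f_Y is Lebesgue integrable over ℝ^r (with the convention 0·log 0 = 0). For ξ in the box B = ∏_{i=1}^r [−Δ_i/2, Δ_i/2] and k ∈ ℤ^r, let P(k | ξ) = (∏_{i=1}^r Δ_i) · f_Y(q̃^k − ξ), where q̃^k = (k_1Δ_1, …, k_rΔ_r). Then (∏_{i=1}^r 1/Δ_i) · ∫_B ( − ∑_{k ∈ ℤ^r} P(k | ξ) log₂ P(k | ξ) ) dξ = − ∫_{ℝ^r} f_Y(y) log₂ f_Y(y) dy − ∑_{i=1}^r log₂ Δ_i. -/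

import Mathlib

open MeasureTheory ProbabilityTheory
open scoped ENNReal NNReal

/-- The density of `Y = X + N` for `X` with density `fX` and `N` an independent noise
vector with independent coordinates uniform on `[-Δ i/2, Δ i/2]`:
`f_Y(y) = (∏ i, 1/Δ i) · ∫_{∏ i [y i − Δ i/2, y i + Δ i/2]} fX(x) dx`. -/
noncomputable def smoothedDensity {r : ℕ} (Δ : Fin r → ℝ) (fX : (Fin r → ℝ) → ℝ)
    (y : Fin r → ℝ) : ℝ :=
  (∏ i, (Δ i)⁻¹) * ∫ x in Set.Icc (fun i => y i - Δ i / 2) (fun i => y i + Δ i / 2), fX x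

/-- The conditional probability mass function of the dithered quantizer output
`q̃^k = (k 1 · Δ 1, …, k r · Δ r)` given the dither value `ξ`:
`P(k | ξ) = (∏ i, Δ i) · f_Y(q̃^k − ξ)`. -/
noncomputable def quantizerPMF {r : ℕ} (Δ : Fin r → ℝ) (fX : (Fin r → ℝ) → ℝ)
    (k : Fin r → ℤ) (ξ : Fin r → ℝ) : ℝ :=
  (∏ i, Δ i) * smoothedDensity Δ fX ((fun i => (k i : ℝ) * Δ i) - ξ)

namespace DitherAux

variable {r : ℕ} {Δ : Fin r → ℝ}

/-- the `k`-th cell -/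
def qcell (Δ : Fin r → ℝ) (k : Fin r → ℤ) : Set (Fin r → ℝ) :=
  Set.Icc (fun i => (k i : ℝ) * Δ i - Δ i / 2) (fun i => (k i : ℝ) * Δ i + Δ i / 2)

theorem qcell_cover (hΔ : ∀ i, 0 < Δ i) : (⋃ k : Fin r → ℤ, qcell Δ k) = Set.univ := by
  refine Set.eq_univ_iff_forall.2 fun y => Set.mem_iUnion.2 ?_
  refine ⟨fun i => round (y i / Δ i), fun i => ?_, fun i => ?_⟩ <;>
  · have h1 := abs_sub_round (y i / Δ i)
    have h2 : y i = y i / Δ i * Δ i := (div_mul_cancel₀ _ (hΔ i).ne').symm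
    rw [abs_le] at h1
    simp only
    nlinarith [hΔ i, h1.1, h1.2]

theorem qcell_aedisjoint (hΔ : ∀ i, 0 < Δ i) :
    Pairwise (Function.onFun (MeasureTheory.AEDisjoint (volume : Measure (Fin r → ℝ))) (qcell Δ)) := by
  intro k k' hkk'
  have : volume (qcell Δ k ∩ qcell Δ k') = 0 := by
    rw [qcell, qcell, Set.Icc_inter_Icc, Real.volume_Icc_pi]
    obtain ⟨i, hi⟩ := Function.ne_iff.1 hkk'
    refine Finset.prod_eq_zero (Finset.mem_univ i) ?_
    rw [ENNReal.ofReal_eq_zero]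
    have habs : (1 : ℝ) ≤ |(k' i : ℝ) - (k i : ℝ)| := by
      rw [← Int.cast_sub, ← Int.cast_abs]
      exact_mod_cast Int.one_le_abs (sub_ne_zero.2 (Ne.symm hi))
    have habs2 : |(k' i : ℝ) * Δ i - (k i : ℝ) * Δ i| = |(k' i : ℝ) - (k i : ℝ)| * Δ i := by
      rw [← sub_mul, abs_mul, abs_of_pos (hΔ i)]
    have hmaxmin := max_sub_min_eq_abs ((k i : ℝ) * Δ i) ((k' i : ℝ) * Δ i)
    have h1 : ((fun i => (k i : ℝ) * Δ i + Δ i / 2) ⊓ fun i => (k' i : ℝ) * Δ i + Δ i / 2) i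
        = min ((k i : ℝ) * Δ i) ((k' i : ℝ) * Δ i) + Δ i / 2 := by
      simp [Pi.inf_apply, min_add_add_right]
    have h2 : ((fun i => (k i : ℝ) * Δ i - Δ i / 2) ⊔ fun i => (k' i : ℝ) * Δ i - Δ i / 2) i
        = max ((k i : ℝ) * Δ i) ((k' i : ℝ) * Δ i) - Δ i / 2 := by
      simp [Pi.sup_apply, sub_eq_add_neg, max_add_add_right]
    rw [h1, h2]
    nlinarith [hΔ i]
  exact this

theorem qcell_image (hΔ : ∀ i, 0 < Δ i) (k : Fin r → ℤ) :
    (fun ξ => (fun i => (k i : ℝ) * Δ i) - ξ) ''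
        Set.Icc (fun i => -(Δ i / 2)) (fun i => Δ i / 2) = qcell Δ k := by
  have hinv : Function.Involutive (fun ξ : Fin r → ℝ => (fun i => (k i : ℝ) * Δ i) - ξ) :=
    fun t => by simp
  rw [Set.image_eq_preimage_of_inverse hinv hinv]
  ext t
  simp only [Set.mem_preimage, qcell, Set.mem_Icc, Pi.le_def, Pi.sub_apply]
  constructor
  · rintro ⟨h1, h2⟩
    exact ⟨fun i => by have := h2 i; linarith,
           fun i => by have := h1 i; linarith⟩
  · rintro ⟨h1, h2⟩
    exact ⟨fun i => by have := h2 i; linarith,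
           fun i => by have := h1 i; linarith⟩

end DitherAux


/-- The conditional entropy of the dithered quantizer output given a dither uniformly
distributed on the box `B = ∏ i [-Δ i/2, Δ i/2]` equals the differential entropy of
`Y = X + N` minus `∑ i, log₂ Δ i`:
`(∏ i, 1/Δ i) · ∫_B (−∑_k P(k|ξ) log₂ P(k|ξ)) dξ = −∫ f_Y log₂ f_Y − ∑ i log₂ Δ i`. -/
theorem stmt_6 {Ω : Type*} [MeasurableSpace Ω] (P : Measure Ω) [IsProbabilityMeasure P]
    (r : ℕ) (hr : 1 ≤ r) (Δ : Fin r → ℝ) (hΔ : ∀ i, 0 < Δ i)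
    (X : Ω → Fin r → ℝ) (hX : Measurable X)
    (fX : (Fin r → ℝ) → ℝ) (hfX : Measurable fX) (hfX0 : ∀ x, 0 ≤ fX x)
    (hXdens : Measure.map X P = volume.withDensity fun x => ENNReal.ofReal (fX x))
    (hint : Integrable
      (fun y => smoothedDensity Δ fX y * Real.logb 2 (smoothedDensity Δ fX y)) volume) :
    (∏ i, (Δ i)⁻¹) *
        ∫ ξ in Set.Icc (fun i => -(Δ i / 2)) (fun i => Δ i / 2),
          (- ∑' k : Fin r → ℤ,
              quantizerPMF Δ fX k ξ * Real.logb 2 (quantizerPMF Δ fX k ξ))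
      = (- ∫ y, smoothedDensity Δ fX y * Real.logb 2 (smoothedDensity Δ fX y))
          - ∑ i, Real.logb 2 (Δ i) := by
  classical
  set fY := smoothedDensity Δ fX with hfY_def
  set B : Set (Fin r → ℝ) := Set.Icc (fun i => -(Δ i / 2)) (fun i => Δ i / 2) with hB_def
  set Pd : ℝ := ∏ i, Δ i with hPd_def
  have hPdpos : 0 < Pd := Finset.prod_pos fun i _ => hΔ i
  have hinvpos : 0 < ∏ i, (Δ i)⁻¹ := Finset.prod_pos fun i _ => inv_pos.2 (hΔ i)
  -- total mass of fX
  have hfX1 : ∫⁻ x, ENNReal.ofReal (fX x) = 1 := by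
    have h0 : Measure.map X P Set.univ = 1 := by
      rw [Measure.map_apply hX MeasurableSet.univ]; simp
    rw [hXdens] at h0
    rwa [withDensity_apply _ MeasurableSet.univ, Measure.restrict_univ] at h0
  -- the lintegral version of the smoothing integral
  set F : (Fin r → ℝ) → ℝ≥0∞ := fun y =>
    ∫⁻ x in Set.Icc (fun i => y i - Δ i / 2) (fun i => y i + Δ i / 2), ENNReal.ofReal (fX x)
    with hF_def
  have hFle : ∀ y, F y ≤ 1 := by
    intro y
    rw [← hfX1]
    exact lintegral_mono' Measure.restrict_le_self le_rfl
  have hFne : ∀ y, F y ≠ ⊤ := fun y => ((hFle y).trans_lt ENNReal.one_lt_top).ne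
  have hkey : ∀ y, fY y = (∏ i, (Δ i)⁻¹) * (F y).toReal := by
    intro y
    rw [hfY_def, smoothedDensity]
    congr 1
    rw [integral_eq_lintegral_of_nonneg_ae (Filter.Eventually.of_forall hfX0)
      hfX.aestronglyMeasurable]
  -- measurability of F
  have hS : MeasurableSet {p : (Fin r → ℝ) × (Fin r → ℝ) |
      p.2 ∈ Set.Icc (fun i => p.1 i - Δ i / 2) (fun i => p.1 i + Δ i / 2)} := by
    have : {p : (Fin r → ℝ) × (Fin r → ℝ) | p.2 ∈ Set.Icc (fun i => p.1 i - Δ i / 2) (fun i => p.1 i + Δ i / 2)}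
        = ⋂ i, ({p : (Fin r → ℝ) × (Fin r → ℝ) | p.1 i - Δ i / 2 ≤ p.2 i} ∩ {p : (Fin r → ℝ) × (Fin r → ℝ) | p.2 i ≤ p.1 i + Δ i / 2}) := by
      ext p
      simp [Set.mem_Icc, Pi.le_def, forall_and]
    rw [this]
    refine MeasurableSet.iInter fun i => (MeasurableSet.inter ?_ ?_)
    · exact measurableSet_le ((measurable_fst.eval).sub_const _) measurable_snd.eval
    · exact measurableSet_le measurable_snd.eval ((measurable_fst.eval).add_const _)
  have hGmeas : Measurable fun p : (Fin r → ℝ) × (Fin r → ℝ) =>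
      Set.indicator {p : (Fin r → ℝ) × (Fin r → ℝ) |
        p.2 ∈ Set.Icc (fun i => p.1 i - Δ i / 2) (fun i => p.1 i + Δ i / 2)}
        (fun p => ENNReal.ofReal (fX p.2)) p :=
    (hfX.comp measurable_snd).ennreal_ofReal.indicator hS
  have hFrw : ∀ y, F y = ∫⁻ x, Set.indicator {p : (Fin r → ℝ) × (Fin r → ℝ) |
        p.2 ∈ Set.Icc (fun i => p.1 i - Δ i / 2) (fun i => p.1 i + Δ i / 2)}
        (fun p => ENNReal.ofReal (fX p.2)) (y, x) := by
    intro y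
    simp only [hF_def]
    rw [← lintegral_indicator measurableSet_Icc]
    refine lintegral_congr fun x => ?_
    by_cases hx : x ∈ Set.Icc (fun i => y i - Δ i / 2) (fun i => y i + Δ i / 2)
    · exact (Set.indicator_of_mem hx _).trans (Set.indicator_of_mem
        (show (y, x) ∈ {p : (Fin r → ℝ) × (Fin r → ℝ) |
          p.2 ∈ Set.Icc (fun i => p.1 i - Δ i / 2) (fun i => p.1 i + Δ i / 2)} from hx)
          (fun p => ENNReal.ofReal (fX p.2))).symm
    · exact (Set.indicator_of_notMem hx _).trans (Set.indicator_of_notMem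
        (show (y, x) ∉ {p : (Fin r → ℝ) × (Fin r → ℝ) |
          p.2 ∈ Set.Icc (fun i => p.1 i - Δ i / 2) (fun i => p.1 i + Δ i / 2)} from hx)
          (fun p => ENNReal.ofReal (fX p.2))).symm
  have hFmeas : Measurable F := by
    have h1 : Measurable fun y : (Fin r → ℝ) =>
        ∫⁻ x, Set.indicator {p : (Fin r → ℝ) × (Fin r → ℝ) |
          p.2 ∈ Set.Icc (fun i => p.1 i - Δ i / 2) (fun i => p.1 i + Δ i / 2)}
          (fun p => ENNReal.ofReal (fX p.2)) (y, x) ∂(volume : Measure (Fin r → ℝ)) :=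
      hGmeas.lintegral_prod_right'
    convert h1 using 1
    ext y
    exact hFrw y
  have hfYmeas : Measurable fY := by
    have : fY = fun y => (∏ i, (Δ i)⁻¹) * (F y).toReal := funext hkey
    rw [this]
    exact measurable_const.mul hFmeas.ennreal_toReal
  have hfY0 : ∀ y, 0 ≤ fY y := by
    intro y
    rw [hkey y]
    exact mul_nonneg hinvpos.le ENNReal.toReal_nonneg
  -- ∫⁻ ofReal fY = 1
  have hofY : ∀ y, ENNReal.ofReal (fY y) = ENNReal.ofReal (∏ i, (Δ i)⁻¹) * F y := by
    intro y
    rw [hkey y, ENNReal.ofReal_mul hinvpos.le, ENNReal.ofReal_toReal (hFne y)]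
  have hFint : ∫⁻ y, F y = ∏ i, ENNReal.ofReal (Δ i) := by
    have hswap : ∫⁻ y, F y = ∫⁻ x, ∫⁻ y, Set.indicator {p : (Fin r → ℝ) × (Fin r → ℝ) |
        p.2 ∈ Set.Icc (fun i => p.1 i - Δ i / 2) (fun i => p.1 i + Δ i / 2)}
        (fun p => ENNReal.ofReal (fX p.2)) (y, x) := by
      rw [show (fun y => F y) = fun y => ∫⁻ x, Set.indicator {p : (Fin r → ℝ) × (Fin r → ℝ) |
          p.2 ∈ Set.Icc (fun i => p.1 i - Δ i / 2) (fun i => p.1 i + Δ i / 2)}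
          (fun p => ENNReal.ofReal (fX p.2)) (y, x) from funext hFrw]
      exact lintegral_lintegral_swap hGmeas.aemeasurable
    rw [hswap]
    have hinner : ∀ x : (Fin r → ℝ), (∫⁻ y, Set.indicator {p : (Fin r → ℝ) × (Fin r → ℝ) |
        p.2 ∈ Set.Icc (fun i => p.1 i - Δ i / 2) (fun i => p.1 i + Δ i / 2)}
        (fun p => ENNReal.ofReal (fX p.2)) (y, x))
        = ENNReal.ofReal (fX x) * ∏ i, ENNReal.ofReal (Δ i) := by
      intro x
      have hset : (fun y : (Fin r → ℝ) => Set.indicator {p : (Fin r → ℝ) × (Fin r → ℝ) |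
          p.2 ∈ Set.Icc (fun i => p.1 i - Δ i / 2) (fun i => p.1 i + Δ i / 2)}
          (fun p => ENNReal.ofReal (fX p.2)) (y, x))
          = Set.indicator (Set.Icc (fun i => x i - Δ i / 2) (fun i => x i + Δ i / 2))
            (fun _ => ENNReal.ofReal (fX x)) := by
        ext y
        have hiff : (x ∈ Set.Icc (fun i => y i - Δ i / 2) (fun i => y i + Δ i / 2)) ↔
            (y ∈ Set.Icc (fun i => x i - Δ i / 2) (fun i => x i + Δ i / 2)) := by
          simp only [Set.mem_Icc, Pi.le_def]
          constructor <;> rintro ⟨h1, h2⟩ <;>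
            exact ⟨fun i => by have := h2 i; linarith,
              fun i => by have := h1 i; linarith⟩
        simp only [Set.indicator_apply, Set.mem_setOf_eq, hiff]
      rw [hset, lintegral_indicator measurableSet_Icc, setLIntegral_const,
        Real.volume_Icc_pi]
      congr 1
      exact Finset.prod_congr rfl fun i _ => by rw [show x i + Δ i / 2 - (x i - Δ i / 2) = Δ i by ring]
    calc ∫⁻ x, _ = ∫⁻ x, ENNReal.ofReal (fX x) * ∏ i, ENNReal.ofReal (Δ i) :=
          lintegral_congr hinner
      _ = (∫⁻ x, ENNReal.ofReal (fX x)) * ∏ i, ENNReal.ofReal (Δ i) := by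
          rw [lintegral_mul_const _ hfX.ennreal_ofReal]
      _ = ∏ i, ENNReal.ofReal (Δ i) := by rw [hfX1, one_mul]
  have hfY1 : ∫⁻ y, ENNReal.ofReal (fY y) = 1 := by
    calc ∫⁻ y, ENNReal.ofReal (fY y)
        = ∫⁻ y, ENNReal.ofReal (∏ i, (Δ i)⁻¹) * F y := lintegral_congr hofY
      _ = ENNReal.ofReal (∏ i, (Δ i)⁻¹) * ∫⁻ y, F y := lintegral_const_mul _ hFmeas
      _ = 1 := by
          rw [hFint, ENNReal.ofReal_prod_of_nonneg (fun i _ => (inv_pos.2 (hΔ i)).le),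
            ← Finset.prod_mul_distrib]
          rw [show (1 : ℝ≥0∞) = ∏ _i : Fin r, 1 by simp]
          refine Finset.prod_congr rfl fun i _ => ?_
          rw [← ENNReal.ofReal_mul (inv_pos.2 (hΔ i)).le, inv_mul_cancel₀ (hΔ i).ne']
          exact ENNReal.ofReal_one
  have hfYint : Integrable fY volume := by
    refine ⟨hfYmeas.aestronglyMeasurable, ?_⟩
    rw [HasFiniteIntegral]
    have : ∀ y, ‖fY y‖ₑ = ENNReal.ofReal (fY y) := fun y =>
      Real.enorm_eq_ofReal (hfY0 y)
    rw [lintegral_congr this, hfY1]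
    exact ENNReal.one_lt_top
  have hfYint1 : ∫ y, fY y = 1 := by
    rw [integral_eq_lintegral_of_nonneg_ae (Filter.Eventually.of_forall hfY0)
      hfYmeas.aestronglyMeasurable, hfY1, ENNReal.toReal_one]
  -- the combined entropy integrand
  set h : (Fin r → ℝ) → ℝ := fun y => fY y * Real.logb 2 (Pd * fY y) with hh_def
  have hhmeas : Measurable h := by
    have : Measurable fun y => Real.logb 2 (Pd * fY y) := by
      simp only [Real.logb]
      exact (Real.measurable_log.comp (measurable_const.mul hfYmeas)).div_const _
    exact hfYmeas.mul this
  have hhsplit : h = (fun y => fY y * Real.logb 2 (fY y)) + fun y => Real.logb 2 Pd * fY y := by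
    funext y
    simp only [hh_def, Pi.add_apply]
    rcases eq_or_lt_of_le (hfY0 y) with h0 | h0
    · simp [← h0]
    · rw [Real.logb, Real.logb, Real.logb, Real.log_mul hPdpos.ne' h0.ne']
      ring
  have hhint : Integrable h volume := by
    rw [hhsplit]
    exact hint.add (hfYint.const_mul _)
  have hhintegral : ∫ y, h y = (∫ y, fY y * Real.logb 2 (fY y)) + Real.logb 2 Pd := by
    rw [hhsplit]
    simp only [Pi.add_apply]
    rw [integral_add hint (hfYint.const_mul _), integral_const_mul, hfYint1, mul_one]
  -- translation and partition machinery
  have hcellmeas : ∀ k : Fin r → ℤ, MeasurableSet (DitherAux.qcell Δ k) :=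
    fun k => measurableSet_Icc
  have hcover := DitherAux.qcell_cover (Δ := Δ) hΔ
  have hdisj := DitherAux.qcell_aedisjoint (Δ := Δ) hΔ
  have hMP : ∀ k : Fin r → ℤ, MeasurePreserving
      (fun ξ : (Fin r → ℝ) => (fun i => (k i : ℝ) * Δ i) - ξ) volume volume :=
    fun k => Measure.measurePreserving_sub_left volume _
  have hemb : ∀ k : Fin r → ℤ, MeasurableEmbedding
      (fun ξ : (Fin r → ℝ) => (fun i => (k i : ℝ) * Δ i) - ξ) :=
    fun k => (MeasurableEquiv.subLeft (fun i => (k i : ℝ) * Δ i)).measurableEmbedding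
  have himg := DitherAux.qcell_image (Δ := Δ) hΔ
  have htransL : ∀ (g : (Fin r → ℝ) → ℝ≥0∞) (k : Fin r → ℤ),
      ∫⁻ ξ in B, g ((fun i => (k i : ℝ) * Δ i) - ξ) = ∫⁻ y in DitherAux.qcell Δ k, g y := by
    intro g k
    rw [(hMP k).setLIntegral_comp_emb (hemb k) g B, hB_def, himg k]
  have htransB : ∀ (g : (Fin r → ℝ) → ℝ) (k : Fin r → ℤ),
      ∫ ξ in B, g ((fun i => (k i : ℝ) * Δ i) - ξ) = ∫ y in DitherAux.qcell Δ k, g y := by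
    intro g k
    rw [← (hMP k).setIntegral_image_emb (hemb k) g B, hB_def, himg k]
  -- pointwise identity for the summands
  have hpt : ∀ (k : Fin r → ℤ) (ξ : (Fin r → ℝ)),
      quantizerPMF Δ fX k ξ * Real.logb 2 (quantizerPMF Δ fX k ξ)
        = Pd * h ((fun i => (k i : ℝ) * Δ i) - ξ) := by
    intro k ξ
    rw [quantizerPMF, hh_def]
    ring
  -- integrability data for tsum interchange
  have hnormtop : ∫⁻ y, (‖h y‖₊ : ℝ≥0∞) ≠ ⊤ := hhint.2.ne
  have hsum_lint : ∑' k : Fin r → ℤ,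
      ∫⁻ y in DitherAux.qcell Δ k, (‖h y‖₊ : ℝ≥0∞) = ∫⁻ y, (‖h y‖₊ : ℝ≥0∞) := by
    rw [← lintegral_iUnion₀ (fun k => (hcellmeas k).nullMeasurableSet) hdisj, hcover,
      Measure.restrict_univ]
  have hfk_meas : ∀ k : Fin r → ℤ, AEStronglyMeasurable
      (fun ξ => quantizerPMF Δ fX k ξ * Real.logb 2 (quantizerPMF Δ fX k ξ))
      (volume.restrict B) := by
    intro k
    have : (fun ξ => quantizerPMF Δ fX k ξ * Real.logb 2 (quantizerPMF Δ fX k ξ))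
        = fun ξ => Pd * h ((fun i => (k i : ℝ) * Δ i) - ξ) := funext fun ξ => hpt k ξ
    rw [this]
    exact (measurable_const.mul (hhmeas.comp (measurable_const.sub
      measurable_id))).aestronglyMeasurable
  have hfk_norm : ∑' k : Fin r → ℤ, ∫⁻ ξ in B,
      (‖quantizerPMF Δ fX k ξ * Real.logb 2 (quantizerPMF Δ fX k ξ)‖₊ : ℝ≥0∞) ≠ ⊤ := by
    have hrw : ∀ k : Fin r → ℤ, ∫⁻ ξ in B,
        (‖quantizerPMF Δ fX k ξ * Real.logb 2 (quantizerPMF Δ fX k ξ)‖₊ : ℝ≥0∞)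
        = (‖Pd‖₊ : ℝ≥0∞) * ∫⁻ y in DitherAux.qcell Δ k, (‖h y‖₊ : ℝ≥0∞) := by
      intro k
      rw [← htransL (fun y => (‖h y‖₊ : ℝ≥0∞)) k, ← lintegral_const_mul' _ _ ENNReal.coe_ne_top]
      refine lintegral_congr fun ξ => ?_
      rw [hpt k ξ, nnnorm_mul, ENNReal.coe_mul]
    rw [tsum_congr hrw, ENNReal.tsum_mul_left, hsum_lint]
    exact ENNReal.mul_ne_top ENNReal.coe_ne_top hnormtop
  -- the main computation
  have hstep : ∫ ξ in B, (∑' k : Fin r → ℤ,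
      quantizerPMF Δ fX k ξ * Real.logb 2 (quantizerPMF Δ fX k ξ)) = Pd * ∫ y, h y := by
    rw [integral_tsum hfk_meas hfk_norm]
    have hterm : ∀ k : Fin r → ℤ,
        ∫ ξ in B, quantizerPMF Δ fX k ξ * Real.logb 2 (quantizerPMF Δ fX k ξ)
        = Pd * ∫ y in DitherAux.qcell Δ k, h y := by
      intro k
      calc ∫ ξ in B, quantizerPMF Δ fX k ξ * Real.logb 2 (quantizerPMF Δ fX k ξ)
          = ∫ ξ in B, Pd * h ((fun i => (k i : ℝ) * Δ i) - ξ) :=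
            integral_congr_ae (Filter.Eventually.of_forall fun ξ => hpt k ξ)
        _ = Pd * ∫ ξ in B, h ((fun i => (k i : ℝ) * Δ i) - ξ) := integral_const_mul _ _
        _ = Pd * ∫ y in DitherAux.qcell Δ k, h y := by rw [htransB h k]
    rw [tsum_congr hterm, tsum_mul_left]
    congr 1
    rw [← integral_iUnion_ae (fun k => (hcellmeas k).nullMeasurableSet) hdisj
      (by rw [hcover]; exact integrableOn_univ.mpr hhint), hcover, Measure.restrict_univ]
  -- sum of logs
  have hlogsum : ∑ i, Real.logb 2 (Δ i) = Real.logb 2 Pd := by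
    simp only [Real.logb, hPd_def]
    rw [← Finset.sum_div, Real.log_prod fun i _ => (hΔ i).ne']
  -- put everything together
  rw [integral_neg, hstep, hlogsum, hhintegral]
  have : (∏ i, (Δ i)⁻¹) * Pd = 1 := by
    rw [hPd_def, ← Finset.prod_mul_distrib]
    rw [show (1 : ℝ) = ∏ _i : Fin r, 1 by simp]
    exact Finset.prod_congr rfl fun i _ => inv_mul_cancel₀ (hΔ i).ne'
  calc (∏ i, (Δ i)⁻¹) * -(Pd * ((∫ y, fY y * Real.logb 2 (fY y)) + Real.logb 2 Pd))
      = -(((∏ i, (Δ i)⁻¹) * Pd) * ((∫ y, fY y * Real.logb 2 (fY y)) + Real.logb 2 Pd)) := by ring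
    _ = (- ∫ y, fY y * Real.logb 2 (fY y)) - Real.logb 2 Pd := by rw [this]; ring
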